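/- Let L be a Lie algebra over ℝ (or any commutative ring), let T, U ∈ L, and let m be a scalar such that ⁅⁅T,U⁆,U⁆ = (2m) • U. Then the following three iterated bracket identities hold: (i) ⁅U, ⁅U, ⁅T, ⁅T, U⁆⁆⁆⁆ = (4m²) • U; (ii) ⁅U, ⁅T, ⁅U, ⁅U, ⁅T, ⁅T, U⁆⁆⁆⁆⁆⁆ = (−8m³) • U; (iii) ⁅U, ⁅U, ⁅U, ⁅T, ⁅T, ⁅T, U⁆⁆⁆⁆⁆⁆ = 0. -/
import Mathlib


/-- In a Lie algebra `L` over a commutative ring `R`, if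
`⁅⁅T,U⁆,U⁆ = (2m) • U`, then the three iterated bracket identities
`⁅U,⁅U,⁅T,⁅T,U⁆⁆⁆⁆ = (4m²) • U`, `⁅U,⁅T,⁅U,⁅U,⁅T,⁅T,U⁆⁆⁆⁆⁆⁆ = (−8m³) • U`,
and `⁅U,⁅U,⁅U,⁅T,⁅T,⁅T,U⁆⁆⁆⁆⁆⁆ = 0` hold. -/
theorem stmt0 {R : Type*} {L : Type*} [CommRing R] [LieRing L] [LieAlgebra R L]
    (T U : L) (m : R) (h : ⁅⁅T, U⁆, U⁆ = (2 * m) • U) :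
    ⁅U, ⁅U, ⁅T, ⁅T, U⁆⁆⁆⁆ = (4 * m ^ 2) • U ∧
    ⁅U, ⁅T, ⁅U, ⁅U, ⁅T, ⁅T, U⁆⁆⁆⁆⁆⁆ = (-(8 * m ^ 3)) • U ∧
    ⁅U, ⁅U, ⁅U, ⁅T, ⁅T, ⁅T, U⁆⁆⁆⁆⁆⁆ = 0 := by
  have hU : ⁅U, ⁅T, U⁆⁆ = (-(2 * m)) • U := by
    rw [← lie_skew U ⁅T, U⁆, h, neg_smul]
  have h1 : ⁅U, ⁅T, ⁅T, U⁆⁆⁆ = (-(2 * m)) • ⁅T, U⁆ := by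
    rw [leibniz_lie, hU, ← lie_skew U T, neg_lie, lie_self, neg_zero, zero_add, lie_smul]
  have h2 : ⁅U, ⁅U, ⁅T, ⁅T, U⁆⁆⁆⁆ = (4 * m ^ 2) • U := by
    rw [h1, lie_smul, hU, smul_smul]
    ring_nf
  refine ⟨h2, ?_, ?_⟩
  · rw [h2, lie_smul, lie_smul, hU, smul_smul]
    ring_nf
  · have h3 : ⁅U, ⁅⁅T, U⁆, ⁅T, ⁅T, U⁆⁆⁆⁆ = (4 * m ^ 2) • ⁅T, U⁆ := by
      rw [leibniz_lie, hU, h1, smul_lie, h1, lie_smul, lie_self, smul_zero, add_zero,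
        smul_smul]
      ring_nf
    have h4 : ⁅U, ⁅T, ⁅T, ⁅T, U⁆⁆⁆⁆
        = -⁅⁅T, U⁆, ⁅T, ⁅T, U⁆⁆⁆ + (-(2 * m)) • ⁅T, ⁅T, U⁆⁆ := by
      rw [leibniz_lie, h1, ← lie_skew U T, neg_lie, lie_smul]
    have h5 : ⁅U, ⁅U, ⁅T, ⁅T, ⁅T, U⁆⁆⁆⁆⁆ = 0 := by
      rw [h4, lie_add, lie_neg, h3, lie_smul, h1, smul_smul]
      ring_nf
      abel
    rw [h5, lie_zero]
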